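/- For any 2-player game G, the game G* with side payments extending G has a unique M-PCE value, equal to ((MSW(G) + mm_1(G) − mm_2(G))/2, (MSW(G) − mm_1(G) + mm_2(G))/2). -/

import Mathlib

open scoped BigOperators Classical

section FGameDefs

/-- A mixed strategy (finitely supported) over a possibly infinite action set. -/
def IsMixedF {A : Type} (s : A →₀ ℝ) : Prop :=
  (∀ a, 0 ≤ s a) ∧ s.sum (fun _ x => x) = 1

/-- Expected utility under finitely-supported mixed strategies. -/
noncomputable def EUF {A B : Type} (u : A → B → ℝ) (s1 : A →₀ ℝ) (s2 : B →₀ ℝ) : ℝ :=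
  s1.sum fun a p => s2.sum fun b q => p * q * u a b

/-- `s2` is a best response of player 2 (utility `u2`) to `s1`. -/
def IsBR2F {A B : Type} (u2 : A → B → ℝ) (s1 : A →₀ ℝ) (s2 : B →₀ ℝ) : Prop :=
  IsMixedF s2 ∧ ∀ t2, IsMixedF t2 → EUF u2 s1 t2 ≤ EUF u2 s1 s2

/-- `s1` is a best response of player 1 (utility `u1`) to `s2`. -/
def IsBR1F {A B : Type} (u1 : A → B → ℝ) (s2 : B →₀ ℝ) (s1 : A →₀ ℝ) : Prop :=
  IsMixedF s1 ∧ ∀ t1, IsMixedF t1 → EUF u1 t1 s2 ≤ EUF u1 s1 s2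

/-- Best utility for player 1 when player 2 best responds. -/
noncomputable def BU1F {A B : Type} (u1 u2 : A → B → ℝ) : ℝ :=
  sSup {x | ∃ s1 s2, IsMixedF s1 ∧ IsBR2F u2 s1 s2 ∧ x = EUF u1 s1 s2}

/-- Best utility for player 2 when player 1 best responds. -/
noncomputable def BU2F {A B : Type} (u1 u2 : A → B → ℝ) : ℝ :=
  sSup {x | ∃ s1 s2, IsMixedF s2 ∧ IsBR1F u1 s2 s1 ∧ x = EUF u2 s1 s2}

/-- α-PCE in the finitely-supported setting. -/
def IsAlphaPCEF {A B : Type} (u1 u2 : A → B → ℝ) (α : ℝ) (s : (A →₀ ℝ) × (B →₀ ℝ)) : Prop :=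
  IsMixedF s.1 ∧ IsMixedF s.2 ∧
    α + BU1F u1 u2 ≤ EUF u1 s.1 s.2 ∧ α + BU2F u1 u2 ≤ EUF u2 s.1 s.2

/-- Max-PCE in the finitely-supported setting. -/
def IsMPCEF {A B : Type} (u1 u2 : A → B → ℝ) (s : (A →₀ ℝ) × (B →₀ ℝ)) : Prop :=
  ∃ α, IsAlphaPCEF u1 u2 α s ∧ ∀ α' s', IsAlphaPCEF u1 u2 α' s' → α' ≤ α

/-- Maximum social welfare over pure action profiles. -/
noncomputable def MSWF {A B : Type} (u1 u2 : A → B → ℝ) : ℝ :=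
  sSup {x | ∃ a b, x = u1 a b + u2 a b}

/-- Player 1's minimax value. -/
noncomputable def mm1F {A B : Type} (u : A → B → ℝ) : ℝ :=
  sInf {x | ∃ s2, IsMixedF s2 ∧ x = sSup {y | ∃ s1, IsMixedF s1 ∧ y = EUF u s1 s2}}

/-- Player 2's minimax value. -/
noncomputable def mm2F {A B : Type} (u : A → B → ℝ) : ℝ :=
  sInf {x | ∃ s1, IsMixedF s1 ∧ x = sSup {y | ∃ s2, IsMixedF s2 ∧ y = EUF u s1 s2}}

/-- Actions of the side-payment extension: original actions plus deal actions
`(a, r, backup)` proposing action profile `a` with transfer `r` from player 1 to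
player 2, and backup action if the deal is not matched. -/
def SPAct (A1 A2 Ai : Type) : Type := Ai ⊕ (A1 × A2) × ℝ × Ai

/-- Player 1's utility in the side-payment extension. -/
noncomputable def uStar1 {A1 A2 : Type} (u1 : A1 → A2 → ℝ) :
    SPAct A1 A2 A1 → SPAct A1 A2 A2 → ℝ
  | Sum.inl b1, Sum.inl b2 => u1 b1 b2
  | Sum.inl b1, Sum.inr (_, _, b2) => u1 b1 b2
  | Sum.inr (_, _, b1), Sum.inl b2 => u1 b1 b2
  | Sum.inr (d1, r1, b1), Sum.inr (d2, r2, b2) =>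
      if d1 = d2 ∧ r1 = r2 then u1 d1.1 d1.2 - r1 else u1 b1 b2

/-- Player 2's utility in the side-payment extension. -/
noncomputable def uStar2 {A1 A2 : Type} (u2 : A1 → A2 → ℝ) :
    SPAct A1 A2 A1 → SPAct A1 A2 A2 → ℝ
  | Sum.inl b1, Sum.inl b2 => u2 b1 b2
  | Sum.inl b1, Sum.inr (_, _, b2) => u2 b1 b2
  | Sum.inr (_, _, b1), Sum.inl b2 => u2 b1 b2
  | Sum.inr (d1, r1, b1), Sum.inr (d2, r2, b2) =>
      if d1 = d2 ∧ r1 = r2 then u2 d1.1 d1.2 + r1 else u2 b1 b2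

end FGameDefs

section SPHelpers

open Finsupp

variable {A B A' B' : Type}

/-- pure strategy -/
noncomputable def pureF (a : A) : A →₀ ℝ := Finsupp.single a 1

lemma isMixed_pureF (a : A) : IsMixedF (pureF a) := by
  constructor
  · intro x
    rw [pureF, Finsupp.single_apply]
    split <;> norm_num
  · simp [pureF, Finsupp.sum_single_index]

/-- column payoff -/
noncomputable def colF (u : A → B → ℝ) (s1 : A →₀ ℝ) (b : B) : ℝ :=
  s1.sum fun a p => p * u a b

lemma EUF_eq_col (u : A → B → ℝ) (s1 : A →₀ ℝ) (s2 : B →₀ ℝ) :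
    EUF u s1 s2 = s2.sum fun b q => q * colF u s1 b := by
  unfold EUF colF Finsupp.sum
  rw [Finset.sum_comm]
  refine Finset.sum_congr rfl fun b _ => ?_
  simp only [Finset.mul_sum]
  refine Finset.sum_congr rfl fun a _ => by ring

lemma colF_le {u : A → B → ℝ} {s1 : A →₀ ℝ} (h1 : IsMixedF s1) {C : ℝ} {b : B}
    (h : ∀ a, u a b ≤ C) : colF u s1 b ≤ C := by
  have := Finset.sum_le_sum (s := s1.support)
    (f := fun a => s1 a * u a b) (g := fun a => s1 a * C)
    (fun a _ => mul_le_mul_of_nonneg_left (h a) (h1.1 a))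
  calc colF u s1 b ≤ s1.support.sum fun a => s1 a * C := this
    _ = (s1.sum fun _ p => p) * C := by rw [Finsupp.sum, Finset.sum_mul]
    _ = C := by rw [h1.2, one_mul]

lemma le_colF {u : A → B → ℝ} {s1 : A →₀ ℝ} (h1 : IsMixedF s1) {C : ℝ} {b : B}
    (h : ∀ a, C ≤ u a b) : C ≤ colF u s1 b := by
  have := Finset.sum_le_sum (s := s1.support)
    (f := fun a => s1 a * C) (g := fun a => s1 a * u a b)
    (fun a _ => mul_le_mul_of_nonneg_left (h a) (h1.1 a))
  calc C = (s1.sum fun _ p => p) * C := by rw [h1.2, one_mul]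
    _ = s1.support.sum fun a => s1 a * C := by rw [Finsupp.sum, Finset.sum_mul]
    _ ≤ colF u s1 b := this

lemma EUF_le_of_col {u : A → B → ℝ} {s1 : A →₀ ℝ} {s2 : B →₀ ℝ}
    (h2 : IsMixedF s2) {C : ℝ} (h : ∀ b, colF u s1 b ≤ C) : EUF u s1 s2 ≤ C := by
  rw [EUF_eq_col]
  have := Finset.sum_le_sum (s := s2.support)
    (f := fun b => s2 b * colF u s1 b) (g := fun b => s2 b * C)
    (fun b _ => mul_le_mul_of_nonneg_left (h b) (h2.1 b))
  calc s2.sum (fun b q => q * colF u s1 b) ≤ s2.support.sum fun b => s2 b * C := this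
    _ = (s2.sum fun _ q => q) * C := by rw [Finsupp.sum, Finset.sum_mul]
    _ = C := by rw [h2.2, one_mul]

lemma le_EUF_of_col {u : A → B → ℝ} {s1 : A →₀ ℝ} {s2 : B →₀ ℝ}
    (h2 : IsMixedF s2) {C : ℝ} (h : ∀ b, C ≤ colF u s1 b) : C ≤ EUF u s1 s2 := by
  rw [EUF_eq_col]
  have := Finset.sum_le_sum (s := s2.support)
    (f := fun b => s2 b * C) (g := fun b => s2 b * colF u s1 b)
    (fun b _ => mul_le_mul_of_nonneg_left (h b) (h2.1 b))
  calc C = (s2.sum fun _ q => q) * C := by rw [h2.2, one_mul]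
    _ = s2.support.sum fun b => s2 b * C := by rw [Finsupp.sum, Finset.sum_mul]
    _ ≤ s2.sum fun b q => q * colF u s1 b := this

lemma EUF_le_of_pointwise {u : A → B → ℝ} {s1 : A →₀ ℝ} {s2 : B →₀ ℝ}
    (h1 : IsMixedF s1) (h2 : IsMixedF s2) {C : ℝ} (h : ∀ a b, u a b ≤ C) :
    EUF u s1 s2 ≤ C :=
  EUF_le_of_col h2 fun b => colF_le h1 fun a => h a b

lemma le_EUF_of_pointwise {u : A → B → ℝ} {s1 : A →₀ ℝ} {s2 : B →₀ ℝ}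
    (h1 : IsMixedF s1) (h2 : IsMixedF s2) {C : ℝ} (h : ∀ a b, C ≤ u a b) :
    C ≤ EUF u s1 s2 :=
  le_EUF_of_col h2 fun b => le_colF h1 fun a => h a b

lemma EUF_pure_right (u : A → B → ℝ) (s1 : A →₀ ℝ) (b : B) :
    EUF u s1 (pureF b) = colF u s1 b := by
  rw [EUF_eq_col, pureF, Finsupp.sum_single_index] <;> simp

lemma colF_pure (u : A → B → ℝ) (a : A) (b : B) : colF u (pureF a) b = u a b := by
  rw [colF, pureF, Finsupp.sum_single_index] <;> simp

lemma EUF_add (u v : A → B → ℝ) (s1 : A →₀ ℝ) (s2 : B →₀ ℝ) :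
    EUF (fun a b => u a b + v a b) s1 s2 = EUF u s1 s2 + EUF v s1 s2 := by
  unfold EUF Finsupp.sum
  rw [← Finset.sum_add_distrib]
  refine Finset.sum_congr rfl fun a _ => ?_
  rw [← Finset.sum_add_distrib]
  refine Finset.sum_congr rfl fun b _ => by ring

lemma isMixed_mapDomain (f : A → A') {s : A →₀ ℝ} (h : IsMixedF s) :
    IsMixedF (Finsupp.mapDomain f s) := by
  constructor
  · intro b
    rw [Finsupp.mapDomain, Finsupp.sum_apply]
    refine Finset.sum_nonneg fun a _ => ?_
    simp only [Finsupp.single_apply]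
    split
    · exact h.1 a
    · exact le_rfl
  · rw [Finsupp.sum_mapDomain_index (by simp) (by intros; rfl)]
    exact h.2

lemma colF_mapDomain (f : A → A') (u : A' → B → ℝ) (s : A →₀ ℝ) (b : B) :
    colF u (Finsupp.mapDomain f s) b = colF (fun a => u (f a)) s b := by
  unfold colF
  rw [Finsupp.sum_mapDomain_index (by simp) (by intros; ring)]

lemma EUF_mapDomain_left (f : A → A') (u : A' → B → ℝ) (s1 : A →₀ ℝ) (s2 : B →₀ ℝ) :
    EUF u (Finsupp.mapDomain f s1) s2 = EUF (fun a b => u (f a) b) s1 s2 := by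
  rw [EUF_eq_col, EUF_eq_col]
  refine Finsupp.sum_congr fun b _ => ?_
  rw [colF_mapDomain]

lemma EUF_mapDomain_right (f : B → B') (u : A → B' → ℝ) (s1 : A →₀ ℝ) (s2 : B →₀ ℝ) :
    EUF u s1 (Finsupp.mapDomain f s2) = EUF (fun a b => u a (f b)) s1 s2 := by
  rw [EUF_eq_col, EUF_eq_col]
  rw [Finsupp.sum_mapDomain_index (by simp) (by intros; ring)]
  rfl

end SPHelpers

section SPMain

set_option linter.unusedSectionVars false

attribute [reducible] SPAct

open Finsupp

variable {A1 A2 : Type} [Fintype A1] [Fintype A2] [Nonempty A1] [Nonempty A2]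

/-- projection of an extended action to its underlying original action -/
def spProj {A1 A2 Ai : Type} : SPAct A1 A2 Ai → Ai := fun x => Sum.elim id (fun p => p.2.2) x

lemma uStar2_inl (u2 : A1 → A2 → ℝ) (x : SPAct A1 A2 A1) (b2 : A2) :
    uStar2 u2 x (Sum.inl b2) = u2 (spProj x) b2 := by
  cases x with
  | inl b => rfl
  | inr p => obtain ⟨d, r, c⟩ := p; rfl

lemma uStar1_inl (u1 : A1 → A2 → ℝ) (b1 : A1) (y : SPAct A1 A2 A2) :
    uStar1 u1 (Sum.inl b1) y = u1 b1 (spProj y) := by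
  cases y with
  | inl b => rfl
  | inr p => obtain ⟨d, r, c⟩ := p; rfl

lemma uStar2_deal_inl (u2 : A1 → A2 → ℝ) (d : A1 × A2) (r : ℝ) (c : A1) (b2 : A2) :
    uStar2 u2 (Sum.inr (d, r, c)) (Sum.inl b2) = u2 c b2 := rfl

lemma uStar2_deal_deal (u2 : A1 → A2 → ℝ) (d : A1 × A2) (r : ℝ) (c : A1)
    (d' : A1 × A2) (r' : ℝ) (b2 : A2) :
    uStar2 u2 (Sum.inr (d, r, c)) (Sum.inr (d', r', b2)) =
      if d = d' ∧ r = r' then u2 d.1 d.2 + r else u2 c b2 := rfl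

lemma uStar1_deal_inl (u1 : A1 → A2 → ℝ) (d : A1 × A2) (r : ℝ) (c : A2) (b1 : A1) :
    uStar1 u1 (Sum.inl b1) (Sum.inr (d, r, c)) = u1 b1 c := rfl

lemma uStar1_deal_deal (u1 : A1 → A2 → ℝ) (d : A1 × A2) (r : ℝ) (b1 : A1)
    (d' : A1 × A2) (r' : ℝ) (c : A2) :
    uStar1 u1 (Sum.inr (d, r, b1)) (Sum.inr (d', r', c)) =
      if d = d' ∧ r = r' then u1 d.1 d.2 - r else u1 b1 c := rfl

lemma sum_mul_const {A : Type} {s : A →₀ ℝ} (h : IsMixedF s) (K : ℝ) :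
    (s.sum fun _ p => p * K) = K := by
  have h2 : (s.sum fun _ p => p * K) = (s.sum fun _ p => p) * K := by
    simp only [Finsupp.sum, Finset.sum_mul]
  rw [h2, h.2, one_mul]

lemma MSWF_set_eq (u1 u2 : A1 → A2 → ℝ) :
    {x | ∃ a b, x = u1 a b + u2 a b} =
      Set.range (fun p : A1 × A2 => u1 p.1 p.2 + u2 p.1 p.2) := by
  ext x
  constructor
  · rintro ⟨a, b, rfl⟩; exact ⟨(a, b), rfl⟩
  · rintro ⟨⟨a, b⟩, rfl⟩; exact ⟨a, b, rfl⟩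

lemma le_MSWF (u1 u2 : A1 → A2 → ℝ) (a : A1) (b : A2) :
    u1 a b + u2 a b ≤ MSWF u1 u2 := by
  rw [MSWF, MSWF_set_eq]
  exact le_csSup (Set.finite_range _).bddAbove ⟨(a, b), rfl⟩

lemma MSWF_attained (u1 u2 : A1 → A2 → ℝ) :
    ∃ a b, MSWF u1 u2 = u1 a b + u2 a b := by
  have h : sSup (Set.range (fun p : A1 × A2 => u1 p.1 p.2 + u2 p.1 p.2)) ∈
      Set.range (fun p : A1 × A2 => u1 p.1 p.2 + u2 p.1 p.2) :=
    (Set.range_nonempty _).csSup_mem (Set.finite_range _)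
  obtain ⟨⟨a, b⟩, hab⟩ := h
  exact ⟨a, b, by rw [MSWF, MSWF_set_eq]; exact hab.symm⟩

lemma exists_bounds (u : A1 → A2 → ℝ) :
    ∃ lo hi : ℝ, ∀ a b, lo ≤ u a b ∧ u a b ≤ hi := by
  obtain ⟨plo, -, hlo⟩ := Finset.exists_min_image (Finset.univ : Finset (A1 × A2))
    (fun p => u p.1 p.2) ⟨(Classical.arbitrary A1, Classical.arbitrary A2), Finset.mem_univ _⟩
  obtain ⟨phi, -, hhi⟩ := Finset.exists_max_image (Finset.univ : Finset (A1 × A2))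
    (fun p => u p.1 p.2) ⟨(Classical.arbitrary A1, Classical.arbitrary A2), Finset.mem_univ _⟩
  exact ⟨u plo.1 plo.2, u phi.1 phi.2,
    fun a b => ⟨hlo (a, b) (Finset.mem_univ _), hhi (a, b) (Finset.mem_univ _)⟩⟩

/-! ### minimax facts for player 2's value `mm2F u2` -/

lemma mm2_le_sup (u2 : A1 → A2 → ℝ) {s1 : A1 →₀ ℝ} (h1 : IsMixedF s1) :
    mm2F u2 ≤ sSup {y | ∃ s2, IsMixedF s2 ∧ y = EUF u2 s1 s2} := by
  obtain ⟨lo, hi, hb⟩ := exists_bounds u2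
  refine csInf_le ⟨lo, ?_⟩ ⟨s1, h1, rfl⟩
  rintro x ⟨t1, ht1, rfl⟩
  have : EUF u2 t1 (pureF (Classical.arbitrary A2)) ∈
      {y | ∃ s2, IsMixedF s2 ∧ y = EUF u2 t1 s2} :=
    ⟨_, isMixed_pureF _, rfl⟩
  refine le_trans ?_ (le_csSup ⟨hi, ?_⟩ this)
  · exact le_EUF_of_pointwise ht1 (isMixed_pureF _) fun a b => (hb a b).1
  · rintro y ⟨t2, ht2, rfl⟩
    exact EUF_le_of_pointwise ht1 ht2 fun a b => (hb a b).2

lemma mm2_eps (u2 : A1 → A2 → ℝ) {ε : ℝ} (hε : 0 < ε) :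
    ∃ s1, IsMixedF s1 ∧ ∀ t2, IsMixedF t2 → EUF u2 s1 t2 ≤ mm2F u2 + ε := by
  obtain ⟨lo, hi, hb⟩ := exists_bounds u2
  have hne : {x | ∃ s1, IsMixedF s1 ∧
      x = sSup {y | ∃ s2, IsMixedF s2 ∧ y = EUF u2 s1 s2}}.Nonempty :=
    ⟨_, pureF (Classical.arbitrary A1), isMixed_pureF _, rfl⟩
  obtain ⟨x, ⟨s1, h1, rfl⟩, hx⟩ := Real.lt_sInf_add_pos hne hε
  refine ⟨s1, h1, fun t2 ht2 => ?_⟩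
  refine le_trans (le_csSup ⟨hi, ?_⟩ (show EUF u2 s1 t2 ∈
    {y | ∃ s2, IsMixedF s2 ∧ y = EUF u2 s1 s2} from ⟨t2, ht2, rfl⟩)) (le_of_lt hx)
  rintro y ⟨t2', ht2', rfl⟩
  exact EUF_le_of_pointwise h1 ht2' fun a b => (hb a b).2

/-! ### minimax facts for player 1's value `mm1F u1` -/

lemma mm1_le_sup (u1 : A1 → A2 → ℝ) {s2 : A2 →₀ ℝ} (h2 : IsMixedF s2) :
    mm1F u1 ≤ sSup {y | ∃ s1, IsMixedF s1 ∧ y = EUF u1 s1 s2} := by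
  obtain ⟨lo, hi, hb⟩ := exists_bounds u1
  refine csInf_le ⟨lo, ?_⟩ ⟨s2, h2, rfl⟩
  rintro x ⟨t2, ht2, rfl⟩
  have : EUF u1 (pureF (Classical.arbitrary A1)) t2 ∈
      {y | ∃ s1, IsMixedF s1 ∧ y = EUF u1 s1 t2} :=
    ⟨_, isMixed_pureF _, rfl⟩
  refine le_trans ?_ (le_csSup ⟨hi, ?_⟩ this)
  · exact le_EUF_of_pointwise (isMixed_pureF _) ht2 fun a b => (hb a b).1
  · rintro y ⟨t1, ht1, rfl⟩
    exact EUF_le_of_pointwise ht1 ht2 fun a b => (hb a b).2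

lemma mm1_eps (u1 : A1 → A2 → ℝ) {ε : ℝ} (hε : 0 < ε) :
    ∃ s2, IsMixedF s2 ∧ ∀ t1, IsMixedF t1 → EUF u1 t1 s2 ≤ mm1F u1 + ε := by
  obtain ⟨lo, hi, hb⟩ := exists_bounds u1
  have hne : {x | ∃ s2, IsMixedF s2 ∧
      x = sSup {y | ∃ s1, IsMixedF s1 ∧ y = EUF u1 s1 s2}}.Nonempty :=
    ⟨_, pureF (Classical.arbitrary A2), isMixed_pureF _, rfl⟩
  obtain ⟨x, ⟨s2, h2, rfl⟩, hx⟩ := Real.lt_sInf_add_pos hne hε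
  refine ⟨s2, h2, fun t1 ht1 => ?_⟩
  refine le_trans (le_csSup ⟨hi, ?_⟩ (show EUF u1 t1 s2 ∈
    {y | ∃ s1, IsMixedF s1 ∧ y = EUF u1 s1 s2} from ⟨t1, ht1, rfl⟩)) (le_of_lt hx)
  rintro y ⟨t1', ht1', rfl⟩
  exact EUF_le_of_pointwise ht1' h2 fun a b => (hb a b).2

/-! ### row helpers -/

noncomputable def rowF {A B : Type} (u : A → B → ℝ) (s2 : B →₀ ℝ) (a : A) : ℝ :=
  s2.sum fun b q => q * u a b

lemma EUF_eq_row {A B : Type} (u : A → B → ℝ) (s1 : A →₀ ℝ) (s2 : B →₀ ℝ) :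
    EUF u s1 s2 = s1.sum fun a p => p * rowF u s2 a := by
  unfold EUF rowF Finsupp.sum
  refine Finset.sum_congr rfl fun a _ => ?_
  simp only [Finset.mul_sum]
  refine Finset.sum_congr rfl fun b _ => by ring

lemma rowF_mapDomain {A B B' : Type} (f : B → B') (u : A → B' → ℝ) (s : B →₀ ℝ) (a : A) :
    rowF u (Finsupp.mapDomain f s) a = rowF (fun a b => u a (f b)) s a := by
  unfold rowF
  rw [Finsupp.sum_mapDomain_index (by simp) (by intros; ring)]

lemma EUF_le_of_row {A B : Type} {u : A → B → ℝ} {s1 : A →₀ ℝ} {s2 : B →₀ ℝ}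
    (h1 : IsMixedF s1) {C : ℝ} (h : ∀ a, rowF u s2 a ≤ C) : EUF u s1 s2 ≤ C := by
  rw [EUF_eq_row]
  have hle := Finset.sum_le_sum (s := s1.support)
    (f := fun a => s1 a * rowF u s2 a) (g := fun a => s1 a * C)
    (fun a _ => mul_le_mul_of_nonneg_left (h a) (h1.1 a))
  calc s1.sum (fun a p => p * rowF u s2 a) ≤ s1.support.sum fun a => s1 a * C := hle
    _ = (s1.sum fun _ p => p) * C := by rw [Finsupp.sum, Finset.sum_mul]
    _ = C := by rw [h1.2, one_mul]

lemma EUF_pure_left {A B : Type} (u : A → B → ℝ) (a : A) (s2 : B →₀ ℝ) :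
    EUF u (pureF a) s2 = rowF u s2 a := by
  rw [EUF_eq_row, pureF, Finsupp.sum_single_index] <;> simp

lemma EUF_pure_pure {A B : Type} (u : A → B → ℝ) (a : A) (b : B) :
    EUF u (pureF a) (pureF b) = u a b := by
  rw [EUF_pure_right, colF_pure]

/-! ### bounds on the elements of the BU sets -/

lemma uStarSum_le (u1 u2 : A1 → A2 → ℝ) :
    ∀ x y, uStar1 u1 x y + uStar2 u2 x y ≤ MSWF u1 u2 := by
  intro x y
  cases x with
  | inl b1 =>
    cases y with
    | inl b2 => exact le_MSWF u1 u2 b1 b2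
    | inr p => obtain ⟨d, r, c⟩ := p; exact le_MSWF u1 u2 b1 c
  | inr p =>
    obtain ⟨d, r, b1⟩ := p
    cases y with
    | inl b2 => exact le_MSWF u1 u2 b1 b2
    | inr q =>
      obtain ⟨d', r', c⟩ := q
      rw [uStar1_deal_deal, uStar2_deal_deal]
      by_cases h : d = d' ∧ r = r'
      · rw [if_pos h, if_pos h]
        have := le_MSWF u1 u2 d.1 d.2; linarith
      · rw [if_neg h, if_neg h]; exact le_MSWF u1 u2 b1 c

lemma EUF_star_sum_le (u1 u2 : A1 → A2 → ℝ) {s1 : (SPAct A1 A2 A1) →₀ ℝ}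
    {s2 : (SPAct A1 A2 A2) →₀ ℝ} (h1 : IsMixedF s1) (h2 : IsMixedF s2) :
    EUF (uStar1 u1) s1 s2 + EUF (uStar2 u2) s1 s2 ≤ MSWF u1 u2 := by
  rw [← EUF_add]
  exact EUF_le_of_pointwise h1 h2 (uStarSum_le u1 u2)

lemma BU1_elem_le (u1 u2 : A1 → A2 → ℝ) {s1 : (SPAct A1 A2 A1) →₀ ℝ}
    {s2 : (SPAct A1 A2 A2) →₀ ℝ} (h1 : IsMixedF s1) (hbr : IsBR2F (uStar2 u2) s1 s2) :
    EUF (uStar1 u1) s1 s2 ≤ MSWF u1 u2 - mm2F u2 := by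
  have hsum := EUF_star_sum_le u1 u2 h1 hbr.1
  have hmm : mm2F u2 ≤ EUF (uStar2 u2) s1 s2 := by
    refine le_trans (mm2_le_sup u2 (isMixed_mapDomain spProj h1)) ?_
    refine csSup_le ⟨_, pureF (Classical.arbitrary A2), isMixed_pureF _, rfl⟩ ?_
    rintro y ⟨t2, ht2, rfl⟩
    have key : EUF u2 (Finsupp.mapDomain spProj s1) t2
        = EUF (uStar2 u2) s1 (Finsupp.mapDomain Sum.inl t2) := by
      simp only [EUF_mapDomain_left, EUF_mapDomain_right, uStar2_inl]
    rw [key]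
    exact hbr.2 _ (isMixed_mapDomain _ ht2)
  linarith

lemma BU2_elem_le (u1 u2 : A1 → A2 → ℝ) {s1 : (SPAct A1 A2 A1) →₀ ℝ}
    {s2 : (SPAct A1 A2 A2) →₀ ℝ} (h2 : IsMixedF s2) (hbr : IsBR1F (uStar1 u1) s2 s1) :
    EUF (uStar2 u2) s1 s2 ≤ MSWF u1 u2 - mm1F u1 := by
  have hsum := EUF_star_sum_le u1 u2 hbr.1 h2
  have hmm : mm1F u1 ≤ EUF (uStar1 u1) s1 s2 := by
    refine le_trans (mm1_le_sup u1 (isMixed_mapDomain spProj h2)) ?_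
    refine csSup_le ⟨_, pureF (Classical.arbitrary A1), isMixed_pureF _, rfl⟩ ?_
    rintro y ⟨t1, ht1, rfl⟩
    have key : EUF u1 t1 (Finsupp.mapDomain spProj s2)
        = EUF (uStar1 u1) (Finsupp.mapDomain Sum.inl t1) s2 := by
      simp only [EUF_mapDomain_left, EUF_mapDomain_right, uStar1_inl]
    rw [key]
    exact hbr.2 _ (isMixed_mapDomain _ ht1)
  linarith

lemma BU1_witness (u1 u2 : A1 → A2 → ℝ) {ε : ℝ} (hε : 0 < ε) :
    ∃ s1 s2, IsMixedF s1 ∧ IsBR2F (uStar2 u2) s1 s2 ∧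
      EUF (uStar1 u1) s1 s2 = MSWF u1 u2 - mm2F u2 - ε := by
  obtain ⟨a, b, hab⟩ := MSWF_attained u1 u2
  obtain ⟨s1', h1', hbd⟩ := mm2_eps u2 hε
  set r : ℝ := mm2F u2 + ε - u2 a b with hr
  refine ⟨Finsupp.mapDomain (fun c : A1 => Sum.inr ((a, b), r, c)) s1',
    pureF (Sum.inr ((a, b), r, b)), isMixed_mapDomain _ h1', ?_, ?_⟩
  case _ =>
    -- best response property
    have hcol : ∀ y, colF (uStar2 u2)
        (Finsupp.mapDomain (fun c : A1 => Sum.inr ((a, b), r, c)) s1') y ≤ u2 a b + r := by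
      intro y
      rw [colF_mapDomain]
      cases y with
      | inl b2 =>
          have e1 : colF (fun c z => uStar2 u2 (Sum.inr ((a, b), r, c)) z) s1' (Sum.inl b2)
              = colF u2 s1' b2 :=
            Finsupp.sum_congr fun c _ => by beta_reduce; rw [uStar2_deal_inl]
          rw [e1, ← EUF_pure_right]
          have := hbd (pureF b2) (isMixed_pureF _)
          linarith
      | inr p =>
          obtain ⟨d', r', b2⟩ := p
          by_cases h : ((a, b) : A1 × A2) = d' ∧ r = r'
          · have e1 : colF (fun c z => uStar2 u2 (Sum.inr ((a, b), r, c)) z) s1'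
                (Sum.inr (d', r', b2)) = s1'.sum fun _ p => p * (u2 a b + r) :=
              Finsupp.sum_congr fun c _ => by beta_reduce; rw [uStar2_deal_deal, if_pos h]
            rw [e1, sum_mul_const h1']
          · have e1 : colF (fun c z => uStar2 u2 (Sum.inr ((a, b), r, c)) z) s1'
                (Sum.inr (d', r', b2)) = colF u2 s1' b2 :=
              Finsupp.sum_congr fun c _ => by beta_reduce; rw [uStar2_deal_deal, if_neg h]
            rw [e1, ← EUF_pure_right]
            have := hbd (pureF b2) (isMixed_pureF _)
            linarith
    have hval : EUF (uStar2 u2)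
        (Finsupp.mapDomain (fun c : A1 => Sum.inr ((a, b), r, c)) s1')
        (pureF (Sum.inr ((a, b), r, b))) = u2 a b + r := by
      rw [EUF_pure_right, colF_mapDomain]
      have e1 : colF (fun c z => uStar2 u2 (Sum.inr ((a, b), r, c)) z) s1'
          (Sum.inr ((a, b), r, b)) = s1'.sum fun _ p => p * (u2 a b + r) :=
        Finsupp.sum_congr fun c _ => by beta_reduce; rw [uStar2_deal_deal, if_pos ⟨rfl, rfl⟩]
      rw [e1, sum_mul_const h1']
    refine ⟨isMixed_pureF _, fun t2 ht2 => ?_⟩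
    rw [hval]
    exact EUF_le_of_col ht2 hcol
  case _ =>
    rw [EUF_pure_right, colF_mapDomain]
    have e1 : colF (fun c z => uStar1 u1 (Sum.inr ((a, b), r, c)) z) s1'
        (Sum.inr ((a, b), r, b)) = s1'.sum fun _ p => p * (u1 a b - r) :=
      Finsupp.sum_congr fun c _ => by beta_reduce; rw [uStar1_deal_deal, if_pos ⟨rfl, rfl⟩]
    rw [e1, sum_mul_const h1', hr, hab]
    ring

lemma BU2_witness (u1 u2 : A1 → A2 → ℝ) {ε : ℝ} (hε : 0 < ε) :
    ∃ s1 s2, IsMixedF s2 ∧ IsBR1F (uStar1 u1) s2 s1 ∧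
      EUF (uStar2 u2) s1 s2 = MSWF u1 u2 - mm1F u1 - ε := by
  obtain ⟨a, b, hab⟩ := MSWF_attained u1 u2
  obtain ⟨s2', h2', hbd⟩ := mm1_eps u1 hε
  set r : ℝ := u1 a b - (mm1F u1 + ε) with hr
  refine ⟨pureF (Sum.inr ((a, b), r, a)),
    Finsupp.mapDomain (fun c : A2 => Sum.inr ((a, b), r, c)) s2',
    isMixed_mapDomain _ h2', ?_, ?_⟩
  case _ =>
    have hrow : ∀ x, rowF (uStar1 u1)
        (Finsupp.mapDomain (fun c : A2 => Sum.inr ((a, b), r, c)) s2') x ≤ u1 a b - r := by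
      intro x
      rw [rowF_mapDomain]
      cases x with
      | inl b1 =>
          have e1 : rowF (fun z c => uStar1 u1 z (Sum.inr ((a, b), r, c))) s2' (Sum.inl b1)
              = rowF u1 s2' b1 :=
            Finsupp.sum_congr fun c _ => by beta_reduce; rw [uStar1_deal_inl]
          rw [e1, ← EUF_pure_left]
          have := hbd (pureF b1) (isMixed_pureF _)
          linarith
      | inr p =>
          obtain ⟨d', r', b1⟩ := p
          by_cases h : d' = ((a, b) : A1 × A2) ∧ r' = r
          · have e1 : rowF (fun z c => uStar1 u1 z (Sum.inr ((a, b), r, c))) s2'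
                (Sum.inr (d', r', b1)) = s2'.sum fun _ q => q * (u1 d'.1 d'.2 - r') :=
              Finsupp.sum_congr fun c _ => by beta_reduce; rw [uStar1_deal_deal, if_pos h]
            rw [e1, sum_mul_const h2', h.1, h.2]
          · have e1 : rowF (fun z c => uStar1 u1 z (Sum.inr ((a, b), r, c))) s2'
                (Sum.inr (d', r', b1)) = rowF u1 s2' b1 :=
              Finsupp.sum_congr fun c _ => by beta_reduce; rw [uStar1_deal_deal, if_neg h]
            rw [e1, ← EUF_pure_left]
            have := hbd (pureF b1) (isMixed_pureF _)
            linarith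
    have hval : EUF (uStar1 u1) (pureF (Sum.inr ((a, b), r, a)))
        (Finsupp.mapDomain (fun c : A2 => Sum.inr ((a, b), r, c)) s2') = u1 a b - r := by
      rw [EUF_pure_left, rowF_mapDomain]
      have e1 : rowF (fun z c => uStar1 u1 z (Sum.inr ((a, b), r, c))) s2'
          (Sum.inr ((a, b), r, a)) = s2'.sum fun _ q => q * (u1 a b - r) :=
        Finsupp.sum_congr fun c _ => by beta_reduce; rw [uStar1_deal_deal, if_pos ⟨rfl, rfl⟩]
      rw [e1, sum_mul_const h2']
    refine ⟨isMixed_pureF _, fun t1 ht1 => ?_⟩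
    rw [hval]
    exact EUF_le_of_row ht1 hrow
  case _ =>
    rw [EUF_pure_left, rowF_mapDomain]
    have e1 : rowF (fun z c => uStar2 u2 z (Sum.inr ((a, b), r, c))) s2'
        (Sum.inr ((a, b), r, a)) = s2'.sum fun _ q => q * (u2 a b + r) :=
      Finsupp.sum_congr fun c _ => by beta_reduce; rw [uStar2_deal_deal, if_pos ⟨rfl, rfl⟩]
    rw [e1, sum_mul_const h2', hr, hab]
    ring

lemma BU1F_eq (u1 u2 : A1 → A2 → ℝ) :
    BU1F (uStar1 u1) (uStar2 u2) = MSWF u1 u2 - mm2F u2 := by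
  have hbdd : ∀ x ∈ {x | ∃ s1 s2, IsMixedF s1 ∧ IsBR2F (uStar2 u2) s1 s2 ∧
      x = EUF (uStar1 u1) s1 s2}, x ≤ MSWF u1 u2 - mm2F u2 := by
    rintro x ⟨s1, s2, h1, hbr, rfl⟩
    exact BU1_elem_le u1 u2 h1 hbr
  have hne : {x | ∃ s1 s2, IsMixedF s1 ∧ IsBR2F (uStar2 u2) s1 s2 ∧
      x = EUF (uStar1 u1) s1 s2}.Nonempty := by
    obtain ⟨s1, s2, h1, hbr, hv⟩ := BU1_witness u1 u2 one_pos
    exact ⟨_, s1, s2, h1, hbr, rfl⟩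
  rw [BU1F]
  refine le_antisymm (csSup_le hne hbdd) ?_
  refine le_of_forall_pos_le_add fun ε hε => ?_
  obtain ⟨s1, s2, h1, hbr, hv⟩ := BU1_witness u1 u2 hε
  have hle : MSWF u1 u2 - mm2F u2 - ε ≤ sSup {x | ∃ s1 s2, IsMixedF s1 ∧
      IsBR2F (uStar2 u2) s1 s2 ∧ x = EUF (uStar1 u1) s1 s2} :=
    le_csSup ⟨_, hbdd⟩ ⟨s1, s2, h1, hbr, hv.symm⟩
  linarith

lemma BU2F_eq (u1 u2 : A1 → A2 → ℝ) :
    BU2F (uStar1 u1) (uStar2 u2) = MSWF u1 u2 - mm1F u1 := by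
  have hbdd : ∀ x ∈ {x | ∃ s1 s2, IsMixedF s2 ∧ IsBR1F (uStar1 u1) s2 s1 ∧
      x = EUF (uStar2 u2) s1 s2}, x ≤ MSWF u1 u2 - mm1F u1 := by
    rintro x ⟨s1, s2, h2, hbr, rfl⟩
    exact BU2_elem_le u1 u2 h2 hbr
  have hne : {x | ∃ s1 s2, IsMixedF s2 ∧ IsBR1F (uStar1 u1) s2 s1 ∧
      x = EUF (uStar2 u2) s1 s2}.Nonempty := by
    obtain ⟨s1, s2, h2, hbr, hv⟩ := BU2_witness u1 u2 one_pos
    exact ⟨_, s1, s2, h2, hbr, rfl⟩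
  rw [BU2F]
  refine le_antisymm (csSup_le hne hbdd) ?_
  refine le_of_forall_pos_le_add fun ε hε => ?_
  obtain ⟨s1, s2, h2, hbr, hv⟩ := BU2_witness u1 u2 hε
  have hle : MSWF u1 u2 - mm1F u1 - ε ≤ sSup {x | ∃ s1 s2, IsMixedF s2 ∧
      IsBR1F (uStar1 u1) s2 s1 ∧ x = EUF (uStar2 u2) s1 s2} :=
    le_csSup ⟨_, hbdd⟩ ⟨s1, s2, h2, hbr, hv.symm⟩
  linarith

end SPMain

/-- the side-payment extension `G*` has an M-PCE, and every M-PCE of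
`G*` has the unique value
`((MSW(G)+mm1(G)−mm2(G))/2, (MSW(G)−mm1(G)+mm2(G))/2)`. -/
theorem sidePayment_mpce_value {A1 A2 : Type} [Fintype A1] [Fintype A2]
    [Nonempty A1] [Nonempty A2] (u1 u2 : A1 → A2 → ℝ) :
    (∃ s, IsMPCEF (uStar1 u1) (uStar2 u2) s) ∧
    ∀ s, IsMPCEF (uStar1 u1) (uStar2 u2) s →
      EUF (uStar1 u1) s.1 s.2 = (MSWF u1 u2 + mm1F u1 - mm2F u2) / 2 ∧
      EUF (uStar2 u2) s.1 s.2 = (MSWF u1 u2 - mm1F u1 + mm2F u2) / 2 := by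
  obtain ⟨a, b, hab⟩ := MSWF_attained u1 u2
  have hBU1 := BU1F_eq u1 u2
  have hBU2 := BU2F_eq u1 u2
  set r : ℝ := (MSWF u1 u2 - mm1F u1 + mm2F u2) / 2 - u2 a b with hr
  have hv1 : EUF (uStar1 u1) (pureF (Sum.inr ((a, b), r, a)))
      (pureF (Sum.inr ((a, b), r, b))) = (MSWF u1 u2 + mm1F u1 - mm2F u2) / 2 := by
    rw [EUF_pure_pure, uStar1_deal_deal, if_pos ⟨rfl, rfl⟩]
    dsimp only
    rw [hr, hab]; ring
  have hv2 : EUF (uStar2 u2) (pureF (Sum.inr ((a, b), r, a)))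
      (pureF (Sum.inr ((a, b), r, b))) = (MSWF u1 u2 - mm1F u1 + mm2F u2) / 2 := by
    rw [EUF_pure_pure, uStar2_deal_deal, if_pos ⟨rfl, rfl⟩]
    dsimp only
    rw [hr]; ring
  have hPCE : IsAlphaPCEF (uStar1 u1) (uStar2 u2)
      ((mm1F u1 + mm2F u2 - MSWF u1 u2) / 2)
      (pureF (Sum.inr ((a, b), r, a)), pureF (Sum.inr ((a, b), r, b))) := by
    unfold IsAlphaPCEF
    dsimp only
    refine ⟨isMixed_pureF _, isMixed_pureF _, ?_, ?_⟩
    · rw [hv1, hBU1]; ring_nf; linarith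
    · rw [hv2, hBU2]; ring_nf; linarith
  have hmax : ∀ α' s', IsAlphaPCEF (uStar1 u1) (uStar2 u2) α' s' →
      α' ≤ (mm1F u1 + mm2F u2 - MSWF u1 u2) / 2 := by
    intro α' s' h'
    unfold IsAlphaPCEF at h'
    obtain ⟨h1, h2, e1, e2⟩ := h'
    have hsum := EUF_star_sum_le u1 u2 h1 h2
    rw [hBU1] at e1
    rw [hBU2] at e2
    linarith
  constructor
  · exact ⟨_, (mm1F u1 + mm2F u2 - MSWF u1 u2) / 2, hPCE, hmax⟩
  · intro s hs
    unfold IsMPCEF at hs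
    obtain ⟨α, hα, hαmax⟩ := hs
    have hle : α ≤ (mm1F u1 + mm2F u2 - MSWF u1 u2) / 2 := hmax α s hα
    have hge : (mm1F u1 + mm2F u2 - MSWF u1 u2) / 2 ≤ α := hαmax _ _ hPCE
    unfold IsAlphaPCEF at hα
    obtain ⟨h1, h2, e1, e2⟩ := hα
    have hsum := EUF_star_sum_le u1 u2 h1 h2
    rw [hBU1] at e1
    rw [hBU2] at e2
    constructor <;> linarith
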